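/- For any real numbers l, m, r, s ≥ 0 with c := l·r − s − 1 > 0 and for any n ≥ e^{max(2mr/c, r)}, the series ∑_{i=1}^∞ i^s (log i)^m / (i^r + n)^l converges and satisfies (3^r + 1)^{−l} (log n / r)^m n^{−c/r} ≤ ∑_{i=1}^∞ i^s (log i)^m / (i^r + n)^l ≤ (3 + 2/c) (log n / r)^m n^{−c/r}. -/

import Mathlib

open Real

private lemma stsb_L1 (m c u v : ℝ) (hm : 0 ≤ m) (hv : 1 ≤ v) (huv : v ≤ u) (h2 : 2 * m ≤ c * v) :
    m * Real.log u ≤ m * Real.log v + c / 2 * (u - v) := by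
  have hv0 : 0 < v := by linarith
  have hu0 : 0 < u := by linarith
  have h1 : Real.log u - Real.log v = Real.log (u / v) := (Real.log_div (ne_of_gt hu0) (ne_of_gt hv0)).symm
  have h2' : Real.log (u / v) ≤ u / v - 1 := Real.log_le_sub_one_of_pos (by positivity)
  have h3 : m * (Real.log u - Real.log v) ≤ m * ((u - v) / v) := by
    rw [h1]
    have heq : u / v - 1 = (u - v) / v := by field_simp
    exact mul_le_mul_of_nonneg_left (heq ▸ h2') hm
  have h4 : m * ((u - v) / v) ≤ c / 2 * (u - v) := by
    have huv' : 0 ≤ u - v := by linarith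
    calc m * ((u - v) / v) = (m / v) * (u - v) := by ring
    _ ≤ c / 2 * (u - v) := by
        apply mul_le_mul_of_nonneg_right _ huv'
        rw [div_le_div_iff₀ hv0 (by norm_num : (0:ℝ) < 2)]
        linarith
  linarith

private lemma stsb_L2 (m c N x : ℝ) (hm : 0 ≤ m) (hN0 : 0 < N) (hN : 1 ≤ Real.log N) (hx : N ≤ x)
    (h2 : 2 * m ≤ c * Real.log N) :
    Real.log x ^ m ≤ Real.log N ^ m * (x / N) ^ (c / 2) := by
  have hx0 : 0 < x := lt_of_lt_of_le hN0 hx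
  have hu : Real.log N ≤ Real.log x := Real.log_le_log hN0 hx
  have hlogN0 : 0 < Real.log N := by linarith
  have hlogx0 : 0 < Real.log x := by linarith
  have key := stsb_L1 m c (Real.log x) (Real.log N) hm hN hu h2
  rw [Real.rpow_def_of_pos hlogx0, Real.rpow_def_of_pos hlogN0,
    Real.rpow_def_of_pos (by positivity : (0:ℝ) < x / N), ← Real.exp_add]
  apply Real.exp_le_exp.mpr
  rw [Real.log_div (ne_of_gt hx0) (ne_of_gt hN0)]
  nlinarith [key]

private lemma stsb_L3 (p k : ℝ) (hp : 0 < p) (hk : 1 ≤ k) :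
    (k + 1) ^ (-(p + 1)) ≤ (1 / p) * (k ^ (-p) - (k + 1) ^ (-p)) := by
  have hk0 : 0 < k := by linarith
  have hk1 : 0 < k + 1 := by linarith
  have hlog : 1 / (k + 1) ≤ Real.log ((k + 1) / k) := by
    have h := Real.log_le_sub_one_of_pos (show (0:ℝ) < k / (k+1) by positivity)
    have h1 : Real.log (k / (k+1)) = - Real.log ((k+1)/k) := by
      rw [Real.log_div (ne_of_gt hk0) (ne_of_gt hk1), Real.log_div (ne_of_gt hk1) (ne_of_gt hk0)]
      ring
    rw [h1] at h
    have h2 : k / (k + 1) - 1 = - (1 / (k + 1)) := by field_simp; ring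
    rw [h2] at h
    linarith
  have hpow : 1 + p / (k + 1) ≤ ((k + 1) / k) ^ p := by
    rw [Real.rpow_def_of_pos (by positivity)]
    calc 1 + p / (k+1) = p * (1 / (k+1)) + 1 := by ring
    _ ≤ p * Real.log ((k+1)/k) + 1 := by nlinarith
    _ ≤ Real.exp (p * Real.log ((k+1)/k)) := Real.add_one_le_exp _
    _ = Real.exp (Real.log ((k+1)/k) * p) := by ring_nf
  have hkp : k ^ (-p) = (k + 1) ^ (-p) * ((k + 1) / k) ^ p := by
    rw [Real.div_rpow (le_of_lt hk1) (le_of_lt hk0), Real.rpow_neg (le_of_lt hk1),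
      Real.rpow_neg (le_of_lt hk0)]
    field_simp
  have hsplit : (k + 1) ^ (-(p + 1)) = (k + 1) ^ (-p) * (k + 1)⁻¹ := by
    rw [show -(p+1) = -p + (-1) from by ring, Real.rpow_add hk1, Real.rpow_neg_one]
  have hpos : (0:ℝ) < (k + 1) ^ (-p) := Real.rpow_pos_of_pos hk1 _
  rw [hkp, hsplit]
  set A := (k + 1) ^ (-p) with hA
  set X := ((k + 1) / k) ^ p with hX
  have h5 : A * p / (k + 1) ≤ A * X - A := by
    have := mul_le_mul_of_nonneg_left hpow hpos.le
    have h6 : A * (1 + p / (k+1)) = A + A * p / (k+1) := by ring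
    nlinarith
  calc A * (k + 1)⁻¹ = 1 / p * (A * p / (k + 1)) := by field_simp
  _ ≤ 1 / p * (A * X - A) := by
      apply mul_le_mul_of_nonneg_left h5 (by positivity)

/-- Lemma 10.2: two-sided bound for the series `∑ i^s (log i)^m / (i^r + n)^l`. -/
theorem series_two_sided_bound (l m r s n : ℝ)
    (hl : 0 ≤ l) (hm : 0 ≤ m) (hr : 0 ≤ r) (hs : 0 ≤ s)
    (hc : 0 < l * r - s - 1)
    (hn : Real.exp (max (2 * m * r / (l * r - s - 1)) r) ≤ n) :
    Summable (fun i : ℕ =>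
      ((i + 1 : ℝ) ^ s * Real.log (i + 1) ^ m) / ((i + 1 : ℝ) ^ r + n) ^ l) ∧
    ((3 : ℝ) ^ r + 1) ^ (-l) * (Real.log n / r) ^ m * n ^ (-(l * r - s - 1) / r) ≤
      (∑' i : ℕ, ((i + 1 : ℝ) ^ s * Real.log (i + 1) ^ m) / ((i + 1 : ℝ) ^ r + n) ^ l) ∧
    (∑' i : ℕ, ((i + 1 : ℝ) ^ s * Real.log (i + 1) ^ m) / ((i + 1 : ℝ) ^ r + n) ^ l) ≤
      (3 + 2 / (l * r - s - 1)) * (Real.log n / r) ^ m * n ^ (-(l * r - s - 1) / r) := by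
  have hr0 : 0 < r := by nlinarith
  have hl0 : 0 < l := by nlinarith
  set c : ℝ := l * r - s - 1 with hcdef
  have hc0 : 0 < c := hc
  have hn0 : 0 < n := lt_of_lt_of_le (Real.exp_pos _) hn
  have hlogn : max (2*m*r/c) r ≤ Real.log n := (Real.le_log_iff_exp_le hn0).mpr hn
  set N : ℝ := n ^ r⁻¹ with hNdef
  have hN0 : 0 < N := Real.rpow_pos_of_pos hn0 _
  have hNr : N ^ r = n := by
    rw [hNdef, ← Real.rpow_mul hn0.le, inv_mul_cancel₀ (ne_of_gt hr0), Real.rpow_one]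
  have hlogN : Real.log N = Real.log n / r := by
    rw [hNdef, Real.log_rpow hn0]; ring
  have hlogN1 : 1 ≤ Real.log N := by
    rw [hlogN, le_div_iff₀ hr0]
    have := le_trans (le_max_right (2*m*r/c) r) hlogn; linarith
  have h2m : 2 * m ≤ c * Real.log N := by
    have h := le_trans (le_max_left (2*m*r/c) r) hlogn
    rw [div_le_iff₀ hc0] at h
    rw [hlogN, show c * (Real.log n / r) = Real.log n * c / r from by ring, le_div_iff₀ hr0]
    linarith
  have hN2 : 2 ≤ N := by nlinarith [Real.log_le_sub_one_of_pos hN0]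
  have hN1 : (1:ℝ) ≤ N := by linarith
  -- integer thresholds
  set k0 : ℕ := ⌈N⌉₊ with hk0def
  set K : ℕ := k0 - 1 with hKdef
  have hk0N : N ≤ (k0:ℝ) := Nat.le_ceil N
  have hk0N' : (k0:ℝ) < N + 1 := Nat.ceil_lt_add_one hN0.le
  have hk01 : 1 ≤ k0 := Nat.one_le_ceil_iff.mpr hN0
  have hKk0 : K + 1 = k0 := Nat.sub_add_cancel hk01
  have hKcast : (K:ℝ) = (k0:ℝ) - 1 := by
    rw [hKdef, Nat.cast_sub hk01, Nat.cast_one]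
  have hKN : (K:ℝ) ≤ N := by linarith
  set f : ℕ → ℝ := fun i : ℕ =>
      ((i + 1 : ℝ) ^ s * Real.log (i + 1) ^ m) / ((i + 1 : ℝ) ^ r + n) ^ l with hfdef
  have hx0 : ∀ i : ℕ, (0:ℝ) < (i:ℝ) + 1 := fun i => by positivity
  have hx1 : ∀ i : ℕ, (1:ℝ) ≤ (i:ℝ) + 1 := fun i => by
    have : (0:ℝ) ≤ (i:ℝ) := Nat.cast_nonneg i
    linarith
  have hlogx0 : ∀ i : ℕ, 0 ≤ Real.log ((i:ℝ) + 1) := fun i => Real.log_nonneg (hx1 i)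
  have hlogN0 : (0:ℝ) ≤ Real.log N := by linarith
  have hf0 : ∀ i, 0 ≤ f i := by
    intro i
    apply div_nonneg
    · exact mul_nonneg (Real.rpow_nonneg (hx0 i).le s) (Real.rpow_nonneg (hlogx0 i) m)
    · exact Real.rpow_nonneg (by positivity) l
  set T : ℝ := Real.log N ^ m * N ^ (-(c/2)) with hTdef
  have hT0 : 0 ≤ T := mul_nonneg (Real.rpow_nonneg hlogN0 m) (Real.rpow_nonneg hN0.le _)
  -- tail pointwise bound
  have htail : ∀ i : ℕ, N ≤ (i:ℝ) + 1 → f i ≤ T * ((i:ℝ) + 1) ^ (-(1 + c/2)) := by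
    intro i hi
    set x : ℝ := (i:ℝ) + 1 with hxdef
    have hx : 0 < x := hx0 i
    have hnum : x ^ s * Real.log x ^ m ≤ x ^ s * (Real.log N ^ m * (x / N) ^ (c/2)) :=
      mul_le_mul_of_nonneg_left (stsb_L2 m c N x hm hN0 hlogN1 hi h2m) (Real.rpow_nonneg hx.le s)
    have hden : x ^ (r * l) ≤ (x ^ r + n) ^ l := by
      rw [Real.rpow_mul hx.le]
      exact Real.rpow_le_rpow (Real.rpow_nonneg hx.le r) (by linarith) hl
    have hden0 : 0 < x ^ (r * l) := Real.rpow_pos_of_pos hx _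
    have hfi : f i = (x ^ s * Real.log x ^ m) / ((x ^ r + n) ^ l) := rfl
    have h1 : f i ≤ x ^ s * (Real.log N ^ m * (x / N) ^ (c/2)) / x ^ (r * l) := by
      rw [hfi]
      apply div_le_div₀ _ hnum hden0 hden
      exact mul_nonneg (Real.rpow_nonneg hx.le s)
        (mul_nonneg (Real.rpow_nonneg hlogN0 m) (Real.rpow_nonneg (by positivity) _))
    have hxe : x ^ s * x ^ (c/2) / x ^ (r*l) = x ^ (-(1 + c/2)) := by
      rw [← Real.rpow_add hx, ← Real.rpow_sub hx]
      congr 1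
      rw [hcdef]; ring
    have h2 : x ^ s * (Real.log N ^ m * (x / N) ^ (c/2)) / x ^ (r * l)
        = T * x ^ (-(1 + c/2)) := by
      rw [Real.div_rpow hx.le hN0.le, hTdef, Real.rpow_neg hN0.le, ← hxe]
      have hN2' : (0:ℝ) < N ^ (c/2) := Real.rpow_pos_of_pos hN0 _
      field_simp
    linarith [h1, h2.le, h2.ge]
  -- head pointwise bound
  have hhead : ∀ i : ℕ, (i:ℝ) + 1 ≤ N → f i ≤ N ^ s * Real.log N ^ m / n ^ l := by
    intro i hi
    set x : ℝ := (i:ℝ) + 1 with hxdef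
    have hx : 0 < x := hx0 i
    have hfi : f i = (x ^ s * Real.log x ^ m) / ((x ^ r + n) ^ l) := rfl
    rw [hfi]
    apply div_le_div₀ (mul_nonneg (Real.rpow_nonneg hN0.le s) (Real.rpow_nonneg hlogN0 m))
      ?_ (Real.rpow_pos_of_pos hn0 l) ?_
    · exact mul_le_mul (Real.rpow_le_rpow hx.le hi hs)
        (Real.rpow_le_rpow (hlogx0 i) (Real.log_le_log hx hi) hm)
        (Real.rpow_nonneg (hlogx0 i) m) (Real.rpow_nonneg hN0.le s)
    · exact Real.rpow_le_rpow hn0.le (le_add_of_nonneg_left (Real.rpow_nonneg hx.le r)) hl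
  -- summability
  have hshift : ∀ i : ℕ, N ≤ ((i + K : ℕ):ℝ) + 1 := by
    intro i
    have h1 : (K:ℝ) + 1 = (k0:ℝ) := by rw [hKcast]; ring
    have h2 : (0:ℝ) ≤ (i:ℝ) := Nat.cast_nonneg i
    push_cast
    linarith [hk0N]
  have hmajsum : Summable (fun i : ℕ => T * (((i + K : ℕ):ℝ) + 1) ^ (-(1 + c/2))) := by
    apply Summable.mul_left
    have h1 : Summable (fun j : ℕ => ((j:ℝ)) ^ (-(1 + c/2))) :=
      Real.summable_nat_rpow.mpr (by linarith)
    have h2 := (summable_nat_add_iff (K+1)).mpr h1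
    exact h2.congr (fun i => by push_cast; ring_nf)
  have hsum : Summable f := by
    apply (summable_nat_add_iff K).mp
    exact Summable.of_nonneg_of_le (fun i => hf0 _) (fun i => htail (i + K) (hshift i)) hmajsum
  -- shared algebra
  have hnl : n ^ l = N ^ (r * l) := by
    rw [← hNr, ← Real.rpow_mul hN0.le]
  have hNc : N ^ (-c) = n ^ (-c / r) := by
    rw [hNdef, ← Real.rpow_mul hn0.le]
    congr 1
    field_simp
  set B : ℝ := Real.log N ^ m * N ^ (-c) with hBdef
  have hB0 : 0 ≤ B := mul_nonneg (Real.rpow_nonneg hlogN0 m) (Real.rpow_nonneg hN0.le _)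
  have e1 : N ^ (s+1) = N ^ s * N := Real.rpow_add_one (ne_of_gt hN0) s
  have e2 : N ^ (s+1) / N ^ (r*l) = N ^ (-c) := by
    rw [← Real.rpow_sub hN0]
    congr 1
    rw [hcdef]; ring
  -- head sum bound
  have hb0 : 0 ≤ N ^ s * Real.log N ^ m / n ^ l :=
    div_nonneg (mul_nonneg (Real.rpow_nonneg hN0.le s) (Real.rpow_nonneg hlogN0 m))
      (Real.rpow_nonneg hn0.le l)
  have hheadsum : ∑ i ∈ Finset.range K, f i ≤ B := by
    have hstep : ∑ i ∈ Finset.range K, f i ≤ K • (N ^ s * Real.log N ^ m / n ^ l) := by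
      have := Finset.sum_le_card_nsmul (Finset.range K) f (N ^ s * Real.log N ^ m / n ^ l) ?_
      · simpa [Finset.card_range] using this
      · intro i hi
        apply hhead
        have : (i:ℝ) + 1 ≤ (K:ℝ) := by exact_mod_cast Nat.succ_le_of_lt (Finset.mem_range.mp hi)
        linarith
    have halg : N * (N ^ s * Real.log N ^ m / n ^ l) = B := by
      rw [hnl, hBdef, ← e2, e1]
      have hd : (0:ℝ) < N ^ (r*l) := Real.rpow_pos_of_pos hN0 _
      field_simp
    calc ∑ i ∈ Finset.range K, f i ≤ K • (N ^ s * Real.log N ^ m / n ^ l) := hstep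
    _ = (K:ℝ) * (N ^ s * Real.log N ^ m / n ^ l) := by rw [nsmul_eq_mul]
    _ ≤ N * (N ^ s * Real.log N ^ m / n ^ l) := mul_le_mul_of_nonneg_right hKN hb0
    _ = B := halg
  -- split off term f K from the shifted tail
  have hsumK : Summable (fun i => f (i + K)) := (summable_nat_add_iff K).mpr hsum
  have hsplit0 : ∑' i, f (i + K) = f K + ∑' i, f (i + (K+1)) := by
    rw [Summable.tsum_eq_zero_add hsumK]
    congr 1
    · simp
    · apply tsum_congr; intro i; congr 1; omega
  -- bound f K
  have hKN1 : N ≤ (K:ℝ) + 1 := by rw [hKcast]; linarith [hk0N]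
  have hfK : f K ≤ B := by
    have h3 : ((K:ℝ) + 1) ^ (-(1 + c/2)) ≤ N ^ (-(1 + c/2)) :=
      Real.rpow_le_rpow_of_nonpos hN0 hKN1 (by linarith)
    have h4 : T * N ^ (-(1 + c/2)) ≤ B := by
      rw [hTdef, hBdef, mul_assoc, ← Real.rpow_add hN0]
      exact mul_le_mul_of_nonneg_left
        (Real.rpow_le_rpow_of_exponent_le hN1 (by linarith)) (Real.rpow_nonneg hlogN0 m)
    calc f K ≤ T * ((K:ℝ) + 1) ^ (-(1 + c/2)) := htail K hKN1
    _ ≤ T * N ^ (-(1 + c/2)) := mul_le_mul_of_nonneg_left h3 hT0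
    _ ≤ B := h4
  -- tail tsum bound via telescoping
  have htailsum : ∑' i, f (i + (K+1)) ≤ 2/c * B := by
    apply Real.tsum_le_of_sum_range_le (fun i => hf0 _)
    intro nn
    set u : ℕ → ℝ := fun j => ((j:ℝ) + (k0:ℝ)) ^ (-(c/2)) with hudef
    have hu0 : ∀ j, 0 ≤ u j := fun j => Real.rpow_nonneg (by positivity) _
    have hbound : ∀ i : ℕ, f (i + (K+1)) ≤ T * (1/(c/2)) * (u i - u (i+1)) := by
      intro i
      have hK1k0 : (K:ℝ) + 1 = (k0:ℝ) := by rw [hKcast]; ring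
      have hNle : N ≤ ((i + (K+1) : ℕ):ℝ) + 1 := by
        push_cast
        have h2 : (0:ℝ) ≤ (i:ℝ) := Nat.cast_nonneg i
        linarith [hk0N]
      have h1 := htail (i + (K+1)) hNle
      have hk : (1:ℝ) ≤ (i:ℝ) + (k0:ℝ) := by
        have h2 : (0:ℝ) ≤ (i:ℝ) := Nat.cast_nonneg i
        have h3 : (1:ℝ) ≤ (k0:ℝ) := by exact_mod_cast hk01
        linarith
      have h2 := stsb_L3 (c/2) ((i:ℝ) + (k0:ℝ)) (by linarith) hk
      have hcast : ((i + (K+1) : ℕ):ℝ) + 1 = ((i:ℝ) + (k0:ℝ)) + 1 := by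
        push_cast; linarith [hK1k0]
      have hexp : (-(1 + c/2) : ℝ) = -(c/2 + 1) := by ring
      have hu1 : u (i+1) = (((i:ℝ) + (k0:ℝ)) + 1) ^ (-(c/2)) := by
        rw [hudef]; push_cast; ring_nf
      calc f (i + (K+1)) ≤ T * (((i:ℝ) + (k0:ℝ)) + 1) ^ (-(c/2 + 1)) := by
            rw [← hexp, ← hcast]; exact h1
      _ ≤ T * (1/(c/2) * (u i - u (i+1))) := by
            apply mul_le_mul_of_nonneg_left _ hT0
            rw [hu1, hudef]
            exact h2
      _ = T * (1/(c/2)) * (u i - u (i+1)) := by ring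
    calc ∑ i ∈ Finset.range nn, f (i + (K+1))
        ≤ ∑ i ∈ Finset.range nn, T * (1/(c/2)) * (u i - u (i+1)) :=
          Finset.sum_le_sum (fun i _ => hbound i)
    _ = T * (1/(c/2)) * (u 0 - u nn) := by
        rw [← Finset.mul_sum, Finset.sum_range_sub' u nn]
    _ ≤ T * (1/(c/2)) * u 0 := by
        apply mul_le_mul_of_nonneg_left _ (by positivity)
        linarith [hu0 nn]
    _ ≤ 2/c * B := by
        have hu0e : u 0 = ((k0:ℝ)) ^ (-(c/2)) := by rw [hudef]; norm_num
        have h5 : u 0 ≤ N ^ (-(c/2)) := by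
          rw [hu0e]
          exact Real.rpow_le_rpow_of_nonpos hN0 hk0N (by linarith)
        have h6 : T * (1/(c/2)) * N ^ (-(c/2)) = 2/c * B := by
          have hNN : N ^ (-(c/2)) * N ^ (-(c/2)) = N ^ (-c) := by
            rw [← Real.rpow_add hN0]; congr 1; ring
          rw [hTdef, hBdef, ← hNN]
          field_simp
        calc T * (1/(c/2)) * u 0 ≤ T * (1/(c/2)) * N ^ (-(c/2)) :=
              mul_le_mul_of_nonneg_left h5 (by positivity)
        _ = 2/c * B := h6
  -- lower bound preparation
  set LB : ℝ := N ^ s * Real.log N ^ m / (((3:ℝ)^r + 1) * n) ^ l with hLBdef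
  have h3r0 : (0:ℝ) ≤ (3:ℝ)^r + 1 := by positivity
  have h3r0' : (0:ℝ) < (3:ℝ)^r + 1 := by positivity
  have hterm : ∀ i ∈ Finset.Ico K (K + k0), LB ≤ f i := by
    intro i hi
    obtain ⟨hi1, hi2⟩ := Finset.mem_Ico.mp hi
    have hge : N ≤ (i:ℝ) + 1 := by
      have hKi : (K:ℝ) ≤ (i:ℝ) := Nat.cast_le.mpr hi1
      linarith [hk0N, hKcast]
    have hle3 : (i:ℝ) + 1 ≤ 3 * N := by
      have hiK : (i:ℝ) < (K:ℝ) + (k0:ℝ) := by exact_mod_cast hi2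
      linarith [hKcast, hk0N', hN1]
    have hfi : f i = (((i:ℝ)+1) ^ s * Real.log ((i:ℝ)+1) ^ m) / ((((i:ℝ)+1)) ^ r + n) ^ l := rfl
    rw [hfi, hLBdef]
    apply div_le_div₀ (mul_nonneg (Real.rpow_nonneg (hx0 i).le s) (Real.rpow_nonneg (hlogx0 i) m))
      ?_ (Real.rpow_pos_of_pos (by positivity) l) ?_
    · exact mul_le_mul (Real.rpow_le_rpow hN0.le hge hs)
        (Real.rpow_le_rpow hlogN0 (Real.log_le_log hN0 hge) hm)
        (Real.rpow_nonneg hlogN0 m) (Real.rpow_nonneg (hx0 i).le s)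
    · apply Real.rpow_le_rpow (by positivity) ?_ hl
      have h7 : ((i:ℝ)+1) ^ r ≤ (3*N) ^ r := Real.rpow_le_rpow (hx0 i).le hle3 hr
      have h8 : (3*N) ^ r = 3 ^ r * n := by rw [Real.mul_rpow (by norm_num) hN0.le, hNr]
      have h9 : ((3:ℝ)^r + 1) * n = 3^r * n + n := by ring
      rw [h9]
      linarith [h7, h8.le, h8.ge]
  have hLB0 : 0 ≤ LB :=
    div_nonneg (mul_nonneg (Real.rpow_nonneg hN0.le s) (Real.rpow_nonneg hlogN0 m))
      (Real.rpow_nonneg (by positivity) l)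
  have hcard : (Finset.Ico K (K + k0)).card = k0 := by rw [Nat.card_Ico]; omega
  have hsumlow : (k0:ℝ) * LB ≤ ∑ i ∈ Finset.Ico K (K + k0), f i := by
    have h := Finset.card_nsmul_le_sum (Finset.Ico K (K + k0)) f LB hterm
    rw [hcard, nsmul_eq_mul] at h
    exact h
  have hNLB : N * LB ≤ (k0:ℝ) * LB := mul_le_mul_of_nonneg_right hk0N hLB0
  have hfin : ∑ i ∈ Finset.Ico K (K + k0), f i ≤ ∑' i, f i :=
    Summable.sum_le_tsum _ (fun i _ => hf0 i) hsum
  have heq : ((3:ℝ)^r + 1) ^ (-l) * Real.log N ^ m * N ^ (-c) = N * LB := by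
    rw [hLBdef, Real.mul_rpow h3r0 hn0.le, hnl, Real.rpow_neg h3r0, ← e2, e1]
    have hd1 : (0:ℝ) < ((3:ℝ)^r + 1) ^ l := Real.rpow_pos_of_pos h3r0' l
    have hd2 : (0:ℝ) < N ^ (r*l) := Real.rpow_pos_of_pos hN0 _
    field_simp
  refine ⟨hsum, ?_, ?_⟩
  · -- lower bound
    rw [← hlogN, ← hNc]
    calc ((3:ℝ)^r + 1) ^ (-l) * Real.log N ^ m * N ^ (-c) = N * LB := heq
    _ ≤ (k0:ℝ) * LB := hNLB
    _ ≤ ∑ i ∈ Finset.Ico K (K + k0), f i := hsumlow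
    _ ≤ ∑' i, f i := hfin
  · -- upper bound
    rw [← hlogN, ← hNc]
    have hfinal : (3 + 2/c) * Real.log N ^ m * N ^ (-c) = (3 + 2/c) * B := by
      rw [hBdef]; ring
    rw [hfinal]
    rw [← Summable.sum_add_tsum_nat_add K hsum, hsplit0]
    have hfinal2 : (3 + 2/c) * B = B + (B + 2/c * B) + B := by ring
    linarith [hheadsum, hfK, htailsum, hB0, hfinal2]
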